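/- arXiv:1207.4105 — 6 statements merged into one kernel-verified Lean document; each statement's English description precedes it below -/
import Mathlib

section
/- Let R be a local ring in which 2 is invertible, (V,q) a quadratic form over R, and u a unit of R. If v, w ∈ V satisfy q(v) = q(w) = u, then there is an isometry of (V,q) (a product of at most two reflections) taking v to w. -/
/-!
STATEMENT 0: Let R be a local ring in which 2 is invertible, (V,q) a quadratic form over R,
and u a unit of R. If v, w ∈ V satisfy q(v) = q(w) = u, then there is an isometry of (V,q)
(a product of at most two reflections) taking v to w.
-/

/-- `f` is the reflection of `(V, q)` through a vector `x` with `q x` a unit `c`: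
`r_x(y) = y - c⁻¹ b_q(x,y) • x`. -/
def QuadraticMap.IsReflection {R V : Type*} [CommRing R] [AddCommGroup V] [Module R V]
    (q : QuadraticForm R V) (f : V →ₗ[R] V) : Prop :=
  ∃ (x : V) (c : Rˣ), q x = (c : R) ∧
    ∀ y, f y = y - (((c⁻¹ : Rˣ) : R) * QuadraticMap.polar q x y) • x


section refl
variable {R V : Type*} [CommRing R] [AddCommGroup V] [Module R V]
  (q : QuadraticForm R V) (x : V) (c : Rˣ) (hx : q x = (c : R))

open QuadraticMap

lemma polar_self' (z : V) : polar (⇑q) z z = 2 * q z := by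
  rw [QuadraticMap.polar_self, two_nsmul, two_mul]

/-- reflection as a linear map -/
def reflLM : V →ₗ[R] V where
  toFun y := y - (((c⁻¹ : Rˣ) : R) * polar q x y) • x
  map_add' a b := by
    simp only [polar_add_right]
    module
  map_smul' r a := by
    simp only [polar_smul_right, RingHom.id_apply, smul_eq_mul]
    module

lemma reflLM_apply (y : V) : reflLM q x c y = y - (((c⁻¹ : Rˣ) : R) * polar q x y) • x := rfl

include hx

lemma polar_reflLM (y : V) : polar q x (reflLM q x c y) = - polar q x y := by
  have hcc : ((c⁻¹ : Rˣ) : R) * (c : R) = 1 := by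
    rw [← Units.val_mul, inv_mul_cancel c, Units.val_one]
  rw [reflLM_apply, sub_eq_add_neg, polar_add_right, ← neg_smul, polar_smul_right,
    polar_self', hx]
  simp only [smul_eq_mul]
  linear_combination (-2 * polar (⇑q) x y) * hcc

lemma reflLM_invol (y : V) : reflLM q x c (reflLM q x c (y)) = y := by
  rw [reflLM_apply, polar_reflLM q x c hx, reflLM_apply]
  simp

lemma q_reflLM (y : V) : q (reflLM q x c y) = q y := by
  have hcc : ((c⁻¹ : Rˣ) : R) * (c : R) = 1 := by
    rw [← Units.val_mul, inv_mul_cancel c, Units.val_one]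
  rw [reflLM_apply, sub_eq_add_neg, QuadraticMap.map_add (⇑q), ← neg_smul,
    QuadraticMap.map_smul, polar_smul_right, hx, polar_comm]
  simp only [smul_eq_mul, QuadraticMap.polar_comm (⇑q) y x]
  linear_combination (((c⁻¹ : Rˣ) : R) * polar (⇑q) x y ^ 2) * hcc

/-- reflection as isometry equiv -/
def reflIso : q.IsometryEquiv q where
  toLinearEquiv :=
    { toLinearMap := reflLM q x c
      invFun := reflLM q x c
      left_inv := reflLM_invol q x c hx
      right_inv := reflLM_invol q x c hx }
  map_app' := q_reflLM q x c hx

lemma reflIso_apply (y : V) :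
    reflIso q x c hx y = y - (((c⁻¹ : Rˣ) : R) * polar q x y) • x := rfl

lemma isReflection_reflLM : QuadraticMap.IsReflection q (reflLM q x c) :=
  ⟨x, c, hx, fun _ => rfl⟩

end refl


open QuadraticMap

theorem exists_isometryEquiv_apply_eq_of_quadraticForm_eq_unit
    {R V : Type*} [CommRing R] [IsLocalRing R] [Invertible (2 : R)]
    [AddCommGroup V] [Module R V] (q : QuadraticForm R V)
    (u : Rˣ) (v w : V) (hv : q v = (u : R)) (hw : q w = (u : R)) :
    ∃ e : q.IsometryEquiv q, e v = w ∧
      (QuadraticMap.IsReflection q (e.toLinearEquiv : V →ₗ[R] V) ∨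
        ∃ f g : V →ₗ[R] V, QuadraticMap.IsReflection q f ∧ QuadraticMap.IsReflection q g ∧
          ∀ y, e y = f (g y)) := by
  have h1 : q (v + w) = q v + q w + polar (⇑q) v w := by
    have e1 : polar (⇑q) v w = q (v + w) - q v - q w := rfl
    linear_combination -e1
  have h2 : q (v - w) = q v + q w - polar (⇑q) v w := by
    have e1 : polar (⇑q) v (-w) = q (v + -w) - q v - q (-w) := rfl
    rw [QuadraticMap.polar_neg_right, QuadraticMap.map_neg, ← sub_eq_add_neg] at e1
    linear_combination -e1
  have hsum : q (v - w) + q (v + w) = 2 * (2 * (u : R)) := by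
    rw [h1, h2, hv, hw]; ring
  have hunit : IsUnit (q (v - w) + q (v + w)) := by
    rw [hsum]
    exact (isUnit_of_invertible (2 : R)).mul ((isUnit_of_invertible (2 : R)).mul u.isUnit)
  rcases IsLocalRing.isUnit_or_isUnit_of_isUnit_add hunit with h | h
  · obtain ⟨c, hc⟩ := h
    have hc' : q (v - w) = (c : R) := hc.symm
    have hcc : ((c⁻¹ : Rˣ) : R) * (c : R) = 1 := by
      rw [← Units.val_mul, inv_mul_cancel c, Units.val_one]
    refine ⟨reflIso q (v - w) c hc', ?_, Or.inl ⟨v - w, c, hc', fun _ => rfl⟩⟩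
    have hb : polar (⇑q) (v - w) v = (c : R) := by
      have e1 : polar (⇑q) (v - w) v = polar (⇑q) v v - polar (⇑q) w v := by
        rw [sub_eq_add_neg, QuadraticMap.polar_add_left, QuadraticMap.polar_neg_left]
        ring
      rw [e1, polar_self', ← hc', h2, hv, hw, QuadraticMap.polar_comm]
      ring
    rw [reflIso_apply, hb, hcc, one_smul]
    abel
  · obtain ⟨d, hd⟩ := h
    have hd' : q (v + w) = (d : R) := hd.symm
    have hdd : ((d⁻¹ : Rˣ) : R) * (d : R) = 1 := by
      rw [← Units.val_mul, inv_mul_cancel d, Units.val_one]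
    refine ⟨(reflIso q (v + w) d hd').trans (reflIso q w u hw), ?_, Or.inr
      ⟨reflLM q w u, reflLM q (v + w) d, isReflection_reflLM q w u hw,
        isReflection_reflLM q (v + w) d hd', fun _ => rfl⟩⟩
    have hb : polar (⇑q) (v + w) v = (d : R) := by
      rw [QuadraticMap.polar_add_left, polar_self', ← hd', h1, hv, hw, QuadraticMap.polar_comm]
      ring
    have step1 : reflIso q (v + w) d hd' v = -w := by
      rw [reflIso_apply, hb, hdd, one_smul]
      abel
    have step2 : reflIso q w u hw (-w) = w := by
      have hs : ((u⁻¹ : Rˣ) : R) * polar (⇑q) w (-w) = -2 := by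
        have huu : ((u⁻¹ : Rˣ) : R) * (u : R) = 1 := by
          rw [← Units.val_mul, inv_mul_cancel u, Units.val_one]
        rw [QuadraticMap.polar_neg_right, polar_self', hw]
        linear_combination (-2 : R) * huu
      rw [reflIso_apply, hs]
      module
    have : ((reflIso q (v + w) d hd').trans (reflIso q w u hw)) v
        = reflIso q w u hw (reflIso q (v + w) d hd' v) := rfl
    rw [this, step1, step2]
end

section
/- Let R be a semilocal principal ideal domain with field of fractions K, q a regular quadratic form over R, and u ∈ R a unit. If u is represented by q over K (i.e., there is x ∈ V ⊗ K with q(x) = u), then u is represented by q over R. -/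
/-!
STATEMENT 3: Let R be a semilocal principal ideal domain with field of fractions K,
q a regular quadratic form over R, and u ∈ R a unit.  If u is represented by q over K,
then u is represented by q over R.

Representation of `u` over `K` is expressed by clearing denominators:
there are `v : V` and `d ≠ 0` with `q v = u * d ^ 2` (i.e. `q (v / d) = u` over `K`).
-/

open QuadraticMap

section Aux

variable {R V : Type*} [CommRing R] [IsDomain R] [IsPrincipalIdealRing R]
    [AddCommGroup V] [Module R V]

/-- A projective module over a domain has no zero smul divisors. -/
lemma aux_noZeroSMulDivisors [Module.Projective R V] : NoZeroSMulDivisors R V := by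
  obtain ⟨s, hs⟩ := Module.projective_def.mp ‹Module.Projective R V›
  constructor
  intro r v h
  rcases eq_or_ne r 0 with hr | hr
  · exact Or.inl hr
  right
  have h1 : r • s v = 0 := by rw [← _root_.map_smul, h, _root_.map_zero]
  rcases smul_eq_zero.mp h1 with h2 | h2
  · exact absurd h2 hr
  · have := hs v
    rw [h2, map_zero] at this
    exact this.symm

/-- If the polar form pairs `v` into the ideal `(p)` against every vector, then
`v` is divisible by `p` (using regularity). -/
lemma aux_exists_smul [Module.Finite R V] [Module.Projective R V]
    (q : QuadraticForm R V) (hreg : Function.Bijective (QuadraticMap.polarBilin q))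
    (p : R) (v : V) (h : ∀ w, polar q v w ∈ Ideal.span {p}) :
    ∃ v₁ : V, v = p • v₁ := by
  haveI : NoZeroSMulDivisors R V := aux_noZeroSMulDivisors
  let b := Module.Free.chooseBasis R V
  have hdvd : ∀ i, p ∣ polar q v (b i) := fun i => Ideal.mem_span_singleton.mp (h (b i))
  choose c hc using hdvd
  obtain ⟨v₂, hv₂⟩ := hreg.2 (Module.Basis.constr b ℕ c)
  refine ⟨v₂, hreg.1 ?_⟩
  have : QuadraticMap.polarBilin q (p • v₂) = p • QuadraticMap.polarBilin q v₂ :=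
    map_smul _ _ _
  rw [this, hv₂]
  refine Module.Basis.ext b fun i => ?_
  rw [polarBilin_apply_apply]
  rw [hc i]
  simp [Module.Basis.constr_basis]

/-- values of a quadratic form on `m • ⊤` lie in `m`, as do polar pairings. -/
lemma aux_mem_of_mem_smul (q : QuadraticForm R V) (m : Ideal R) {w : V}
    (hw : w ∈ m • (⊤ : Submodule R V)) : q w ∈ m ∧ ∀ y, polar q w y ∈ m := by
  refine Submodule.smul_induction_on hw ?_ ?_
  · intro r hr n _
    constructor
    · rw [QuadraticMap.map_smul, smul_eq_mul]
      exact Ideal.mul_mem_right _ _ (Ideal.mul_mem_right _ _ hr)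
    · intro y
      rw [polar_smul_left, smul_eq_mul]
      exact Ideal.mul_mem_right _ _ hr
  · intro x y hx hy
    constructor
    · rw [QuadraticMap.map_add ⇑q x y]
      exact Ideal.add_mem _ (Ideal.add_mem _ hx.1 hy.1) (hx.2 y)
    · intro z
      rw [polar_add_left]
      exact Ideal.add_mem _ (hx.2 z) (hy.2 z)

/-- CRT-style: given a maximal ideal `m` and a finite set `F` of maximal ideals not
containing `m`, there is `e ≡ 1 mod m` with `e ∈ m'` for all `m' ∈ F`. -/
lemma aux_crt {m : Ideal R} (hm : m.IsMaximal) (F : Finset (Ideal R))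
    (hF : ∀ m' ∈ F, m'.IsMaximal) (hmF : m ∉ F) :
    ∃ e : R, 1 - e ∈ m ∧ ∀ m' ∈ F, e ∈ m' := by
  classical
  induction F using Finset.induction with
  | empty => exact ⟨1, by simp, by simp⟩
  | @insert m'' F hm''F ih =>
    obtain ⟨e, he1, he2⟩ := ih (fun m' hm' => hF m' (Finset.mem_insert_of_mem hm'))
      (fun hmem => hmF (Finset.mem_insert_of_mem hmem))
    have hm'' : Ideal.IsMaximal m'' := hF m'' (Finset.mem_insert_self _ _)
    have hne : m ≠ m'' := fun hEq => hmF (hEq ▸ Finset.mem_insert_self _ _)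
    obtain ⟨x, hx, y, hy, hxy⟩ := Ideal.isCoprime_iff_exists.mp
      (Ideal.isCoprime_iff_sup_eq.mpr (Ideal.IsMaximal.coprime_of_ne hm hm'' hne))
    refine ⟨e * y, ?_, ?_⟩
    · have : 1 - e * y = (1 - e) + e * x := by
        have : y = 1 - x := by linear_combination hxy
        rw [this]; ring
      rw [this]
      exact Ideal.add_mem _ he1 (Ideal.mul_mem_left _ _ hx)
    · intro m' hm'
      rcases Finset.mem_insert.mp hm' with h | h
      · exact h ▸ Ideal.mul_mem_left _ _ hy
      · exact Ideal.mul_mem_right _ _ (he2 m' h)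

end Aux

theorem represents_unit_of_represents_over_fractions
    {R V : Type*} [CommRing R] [IsDomain R] [IsPrincipalIdealRing R]
    (hsemilocal : {I : Ideal R | I.IsMaximal}.Finite)
    [AddCommGroup V] [Module R V] [Module.Finite R V] [Module.Projective R V]
    (q : QuadraticForm R V)
    (hreg : Function.Bijective (QuadraticMap.polarBilin q))
    (u : Rˣ)
    (hK : ∃ (v : V) (d : R), d ≠ 0 ∧ q v = (u : R) * d ^ 2) :
    ∃ v : V, q v = (u : R) := by
  classical
  obtain ⟨v0, d0, hd0, hqv0⟩ := hK
  have main : ∀ d : R, d ≠ 0 → ∀ v : V, q v = (u : R) * d ^ 2 → ∃ v' : V, q v' = (u : R) := by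
    intro d
    refine wellFounded_dvdNotUnit.induction
      (C := fun d => d ≠ 0 → ∀ v : V, q v = (u : R) * d ^ 2 → ∃ v' : V, q v' = (u : R))
      d ?_
    clear d
    intro d ih hd v hqv
    by_cases hex : ∃ p : R, Prime p ∧ p ∣ d ∧ ∃ v₁ : V, v = p • v₁
    · -- divide out the content, recurse
      obtain ⟨p, hp, hpd, v₁, hv₁⟩ := hex
      obtain ⟨d₁, hd₁⟩ := hpd
      have hd₁0 : d₁ ≠ 0 := fun h => hd (by rw [hd₁, h, mul_zero])
      have hqv₁ : q v₁ = (u : R) * d₁ ^ 2 := by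
        have h1 : q v = p * p * q v₁ := by
          rw [hv₁, QuadraticMap.map_smul, smul_eq_mul]
        have h2 : p * p * q v₁ = p * p * ((u : R) * d₁ ^ 2) := by
          rw [← h1, hqv, hd₁]; ring
        exact mul_left_cancel₀ (mul_ne_zero hp.ne_zero hp.ne_zero) h2
      exact ih d₁ ⟨hd₁0, p, hp.not_unit, by rw [hd₁, mul_comm]⟩ hd₁0 v₁ hqv₁
    · -- main construction
      push_neg at hex
      have hprim : ∀ p : R, Prime p → p ∣ d → ∃ w : V, polar q v w ∉ Ideal.span {p} := by
        intro p hp hpd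
        by_contra hcon
        push_neg at hcon
        obtain ⟨v₁, hv₁⟩ := aux_exists_smul q hreg p v hcon
        exact hex p hp hpd v₁ hv₁
      set M : Finset (Ideal R) := hsemilocal.toFinset with hM
      have hMmax : ∀ m ∈ M, Ideal.IsMaximal m := fun m hm => hsemilocal.mem_toFinset.mp hm
      set S : Finset (Ideal R) := M.filter (fun m => d ∈ m) with hS
      -- for each m ∈ S choose w_m with polar v w_m ∉ m
      have hwm : ∀ m ∈ S, ∃ w : V, polar q v w ∉ m := by
        intro m hm
        have hmM : m ∈ M := (Finset.mem_filter.mp hm).1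
        have hdm : d ∈ m := (Finset.mem_filter.mp hm).2
        have hmax : Ideal.IsMaximal m := hMmax m hmM
        haveI : m.IsPrincipal := IsPrincipalIdealRing.principal m
        haveI : m.IsPrime := hmax.isPrime
        have hmbot : m ≠ ⊥ := fun h => hd (by
          simpa [h, Ideal.mem_bot] using hdm)
        have hg : Prime (Submodule.IsPrincipal.generator m) :=
          Submodule.IsPrincipal.prime_generator_of_isPrime m hmbot
        have hgd : Submodule.IsPrincipal.generator m ∣ d :=
          (Submodule.IsPrincipal.mem_iff_generator_dvd m).mp hdm
        obtain ⟨w, hw⟩ := hprim _ hg hgd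
        refine ⟨w, fun hmem => hw ?_⟩
        rwa [Ideal.span_singleton_generator m]
      choose w hw using hwm
      -- for each m ∈ S choose CRT element
      have hem : ∀ m ∈ S, ∃ e : R, 1 - e ∈ m ∧ ∀ m' ∈ M, m' ≠ m → e ∈ m' := by
        intro m hm
        have hmM : m ∈ M := (Finset.mem_filter.mp hm).1
        obtain ⟨e, he1, he2⟩ := aux_crt (hMmax m hmM) (M.erase m)
          (fun m' hm' => hMmax m' (Finset.mem_of_mem_erase hm'))
          (Finset.notMem_erase m M)
        exact ⟨e, he1, fun m' hm' hne => he2 m' (Finset.mem_erase.mpr ⟨hne, hm'⟩)⟩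
      choose ε hε using hem
      -- the combined vector
      set W : V := ∑ m ∈ S.attach, ε m.1 m.2 • w m.1 m.2 with hW
      set b : R := polar q v W with hb
      set a : R := q W with ha
      set E : R := (u : R) * d - b + d * a with hE
      -- expansion of b as a sum
      have hbsum : b = ∑ m ∈ S.attach, ε m.1 m.2 * polar q v (w m.1 m.2) := by
        calc b = (QuadraticMap.polarBilin q v) W := (polarBilin_apply_apply q v W).symm
          _ = ∑ m ∈ S.attach, (QuadraticMap.polarBilin q v) (ε m.1 m.2 • w m.1 m.2) :=
            map_sum _ _ _
          _ = ∑ m ∈ S.attach, ε m.1 m.2 * polar q v (w m.1 m.2) := by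
            refine Finset.sum_congr rfl fun m _ => ?_
            rw [_root_.map_smul, smul_eq_mul, polarBilin_apply_apply]
      -- the quadratic value of the new vector
      set y : V := (a - (u : R)) • v + (2 * (u : R) * d - b) • W with hy
      have hqy : q y = (u : R) * E ^ 2 := by
        rw [hy, QuadraticMap.map_add ⇑q, QuadraticMap.map_smul, QuadraticMap.map_smul,
          polar_smul_left, polar_smul_right, ← hb, ← ha]
        simp only [smul_eq_mul]
        rw [hqv, hE]
        ring
      -- E is a unit
      have hEunit : IsUnit E := by
        by_contra hcon
        obtain ⟨m₀, hm₀max, hm₀mem⟩ :=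
          exists_max_ideal_of_mem_nonunits (mem_nonunits_iff.mpr hcon)
        have hm₀M : m₀ ∈ M := hsemilocal.mem_toFinset.mpr hm₀max
        by_cases hdm₀ : d ∈ m₀
        · -- at maximal ideals containing d, E ≡ -polar q v (w m₀) mod m₀, a non-element
          have hm₀S : m₀ ∈ S := Finset.mem_filter.mpr ⟨hm₀M, hdm₀⟩
          set t₀ : {x // x ∈ S} := ⟨m₀, hm₀S⟩ with ht₀
          have hsplit : b - polar q v (w m₀ hm₀S) =
              (ε m₀ hm₀S - 1) * polar q v (w m₀ hm₀S) +
              ∑ m ∈ S.attach.erase t₀, ε m.1 m.2 * polar q v (w m.1 m.2) := by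
            rw [hbsum, ← Finset.add_sum_erase _ _ (Finset.mem_attach S t₀)]
            ring
          have hrest : (∑ m ∈ S.attach.erase t₀,
              ε m.1 m.2 * polar q v (w m.1 m.2)) ∈ m₀ := by
            refine Ideal.sum_mem _ fun m hm => ?_
            have hne : m.1 ≠ m₀ := by
              intro h
              exact (Finset.mem_erase.mp hm).1 (Subtype.ext h)
            exact Ideal.mul_mem_right _ _ ((hε m.1 m.2).2 m₀ hm₀M hne.symm)
          have hfirst : (ε m₀ hm₀S - 1) * polar q v (w m₀ hm₀S) ∈ m₀ := by
            refine Ideal.mul_mem_right _ _ ?_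
            have := (hε m₀ hm₀S).1
            simpa using m₀.neg_mem this
          have hbP : b - polar q v (w m₀ hm₀S) ∈ m₀ := by
            rw [hsplit]; exact Ideal.add_mem _ hfirst hrest
          have hbm : b ∈ m₀ := by
            have h1 : (u : R) * d ∈ m₀ := Ideal.mul_mem_left _ _ hdm₀
            have h2 : d * a ∈ m₀ := Ideal.mul_mem_right _ _ hdm₀
            have : b = (u : R) * d + d * a - E := by rw [hE]; ring
            rw [this]
            exact Ideal.sub_mem _ (Ideal.add_mem _ h1 h2) hm₀mem
          have : polar q v (w m₀ hm₀S) ∈ m₀ := by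
            have := Ideal.sub_mem _ hbm hbP
            simpa using this
          exact hw m₀ hm₀S this
        · -- at maximal ideals not containing d, E ≡ u * d mod m₀, a non-element
          have hεmem : ∀ (m : Ideal R) (hm : m ∈ S), ε m hm ∈ m₀ := by
            intro m hm
            have hdm : d ∈ m := (Finset.mem_filter.mp hm).2
            have hne : m ≠ m₀ := fun h => hdm₀ (h ▸ hdm)
            exact (hε m hm).2 m₀ hm₀M (fun h => hne h.symm)
          have hbm : b ∈ m₀ := by
            rw [hbsum]
            exact Ideal.sum_mem _ fun m _ => Ideal.mul_mem_right _ _ (hεmem m.1 m.2)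
          have ham : a ∈ m₀ := by
            have hWmem : W ∈ m₀ • (⊤ : Submodule R V) := by
              rw [hW]
              refine Submodule.sum_mem _ fun m _ => ?_
              exact Submodule.smul_mem_smul (hεmem m.1 m.2) trivial
            exact (aux_mem_of_mem_smul q m₀ hWmem).1
          have hud : (u : R) * d ∈ m₀ := by
            have : (u : R) * d = E + b - d * a := by rw [hE]; ring
            rw [this]
            exact Ideal.sub_mem _ (Ideal.add_mem _ hm₀mem hbm)
              (Ideal.mul_mem_left _ _ ham)
          have : d ∈ m₀ := by
            have hd' : d = ((u⁻¹ : Rˣ) : R) * ((u : R) * d) := by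
              rw [← mul_assoc, Units.inv_mul, one_mul]
            rw [hd']
            exact Ideal.mul_mem_left _ _ hud
          exact hdm₀ this
      obtain ⟨Eu, hEu⟩ := hEunit
      refine ⟨((Eu⁻¹ : Rˣ) : R) • y, ?_⟩
      rw [QuadraticMap.map_smul, smul_eq_mul, hqy, ← hEu]
      have hinv : ((Eu⁻¹ : Rˣ) : R) * (Eu : R) = 1 := Units.inv_mul Eu
      linear_combination ((u : R) * (((Eu⁻¹ : Rˣ) : R) * (Eu : R) + 1)) * hinv
  exact main d0 hd0 v0 hqv0
end

section
/- Let R be a complete discrete valuation ring with 2 invertible, K its fraction field, and q = q₁ ⊥ ⟨π⟩ a quadratic form over R where q₁ is regular and π is a uniformizer. If a unit u ∈ R× is represented by q over K, then u is represented by q over R. -/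
section Aux

variable {R V₁ : Type*} [CommRing R] [IsDomain R] [IsDiscreteValuationRing R]
    [AddCommGroup V₁] [Module R V₁] [Module.Finite R V₁] [Module.Projective R V₁]

open QuadraticMap

/-- If `v` is not divisible by `π`, then the polar form at `v` takes the value 1. -/
lemma exists_polar_eq_one (q₁ : QuadraticForm R V₁)
    (hreg : Function.Bijective (QuadraticMap.polarBilin q₁))
    {π : R} (hπ : Irreducible π) {v : V₁} (hv : ∀ w : V₁, v ≠ π • w) :
    ∃ z : V₁, polar q₁ v z = 1 := by
  have hfp : Module.FinitePresentation R V₁ := Module.finitePresentation_of_projective R V₁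
  have hfree : Module.Free R V₁ := Module.free_of_flat_of_isLocalRing
  by_cases hall : ∀ z : V₁, π ∣ polar q₁ v z
  · -- then v = π • w, contradiction
    exfalso
    classical
    let b := Module.Free.chooseBasis R V₁
    choose c hc using fun i => hall (b i)
    let f : V₁ →ₗ[R] R := b.constr ℕ c
    have hf : polarBilin q₁ v = π • f := by
      refine b.ext fun i => ?_
      simp only [LinearMap.smul_apply, smul_eq_mul, f, Module.Basis.constr_basis]
      rw [polarBilin_apply_apply, hc i]
    obtain ⟨w, hw⟩ := hreg.2 f
    refine hv w ?_
    apply hreg.1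
    rw [LinearMap.map_smul, hw, hf]
  · push_neg at hall
    obtain ⟨z, hz⟩ := hall
    have hu : IsUnit (polar q₁ v z) := by
      by_contra h
      apply hz
      have : polar q₁ v z ∈ IsLocalRing.maximalIdeal R := h
      rwa [hπ.maximalIdeal_eq, Ideal.mem_span_singleton] at this
    obtain ⟨a, ha⟩ := hu.exists_left_inv
    refine ⟨a • z, ?_⟩
    rw [polar_smul_right, smul_eq_mul, ha]

/-- Hensel's lemma for regular quadratic forms over complete DVRs: a unit value taken
modulo `π` is taken exactly. -/
lemma hensel_represents (q₁ : QuadraticForm R V₁)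
    [IsAdicComplete (IsLocalRing.maximalIdeal R) R]
    (hreg : Function.Bijective (QuadraticMap.polarBilin q₁))
    {π : R} (hπ : Irreducible π) (u : Rˣ) {v : V₁}
    (h : π ∣ (q₁ v - (u : R))) : ∃ v' : V₁, q₁ v' = (u : R) := by
  obtain ⟨m, hm⟩ := h
  -- v is not divisible by π
  have hv : ∀ w : V₁, v ≠ π • w := by
    rintro w rfl
    have : (u : R) = π * (π * q₁ w - m) := by
      have h5 := QuadraticMap.map_smul q₁ π w
      rw [smul_eq_mul] at h5
      linear_combination h5 - hm
    exact hπ.not_isUnit (isUnit_of_mul_isUnit_left (by rw [← this]; exact u.isUnit))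
  obtain ⟨z, hz⟩ := exists_polar_eq_one q₁ hreg hπ hv
  set a₀ : R := q₁ v - (u : R) with ha₀
  set c : R := q₁ z with hc
  -- solve y^2 + y + c*a₀ = 0 by Hensel's lemma
  have hmem : c * a₀ ∈ IsLocalRing.maximalIdeal R := by
    rw [hπ.maximalIdeal_eq, hm]
    exact Ideal.mul_mem_left _ _ (Ideal.mul_mem_right _ _ (Ideal.mem_span_singleton_self π))
  have H := HenselianRing.is_henselian (I := IsLocalRing.maximalIdeal R)
    (Polynomial.X ^ 2 + Polynomial.X + Polynomial.C (c * a₀)) ?_ 0 ?_ ?_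
  · obtain ⟨y, hy, hy0⟩ := H
    have hy' : y ^ 2 + y + c * a₀ = 0 := by
      have h6 := hy
      simp only [Polynomial.IsRoot, Polynomial.eval_add, Polynomial.eval_pow,
        Polynomial.eval_X, Polynomial.eval_C] at h6
      linear_combination h6
    rw [sub_zero] at hy0
    have hyu : IsUnit (y + 1) := by
      by_contra hyu
      have h1 : y + 1 ∈ IsLocalRing.maximalIdeal R := hyu
      have : (1 : R) ∈ IsLocalRing.maximalIdeal R := by
        have := Ideal.sub_mem _ h1 hy0
        simpa using this
      exact Ideal.IsMaximal.ne_top inferInstance (Ideal.eq_top_of_isUnit_mem _ this isUnit_one)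
    obtain ⟨W, hW⟩ := hyu
    set s : R := -a₀ * (↑W⁻¹ : R) with hs
    have hsW : s * (y + 1) = -a₀ := by
      rw [hs, mul_assoc, ← hW, Units.inv_mul, mul_one]
    have key : c * s ^ 2 + s + a₀ = 0 := by
      have h2 : (c * s ^ 2 + s + a₀) * (y + 1) ^ 2 = 0 := by
        linear_combination a₀ * hy' + (c * (s * (y + 1) - a₀) + (y + 1)) * hsW
      rcases mul_eq_zero.mp h2 with h3 | h3
      · exact h3
      · exfalso
        have hne : (y + 1) ≠ 0 := by rw [← hW]; exact W.ne_zero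
        exact hne (pow_eq_zero_iff (n := 2) (by norm_num) |>.mp h3)
    refine ⟨v + s • z, ?_⟩
    have hadd := QuadraticMap.map_add q₁ v (s • z)
    rw [QuadraticMap.map_smul, polar_smul_right, smul_eq_mul, smul_eq_mul, hz] at hadd
    rw [hadd]
    have : q₁ v = (u : R) + a₀ := by rw [ha₀]; ring
    rw [this]
    linear_combination key
  · -- monic
    rw [add_assoc]
    apply Polynomial.monic_X_pow_add
    rw [Polynomial.degree_X_add_C]
    norm_num
  · simp [hmem]
  · simp

end Aux

/-!
STATEMENT 4: Let R be a complete discrete valuation ring with 2 invertible, K its fraction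
field, and q = q₁ ⊥ ⟨π⟩ a quadratic form over R where q₁ is regular and π is a uniformizer.
If a unit u ∈ R× is represented by q over K, then u is represented by q over R.

`⟨π⟩` is the rank-one form `x ↦ π * x ^ 2` on `R`, i.e. `π • QuadraticMap.sq`.
Representation over `K` is expressed by clearing denominators.
-/

theorem represents_unit_of_represents_over_fractions_simple_degeneration
    {R V₁ : Type*} [CommRing R] [IsDomain R] [IsDiscreteValuationRing R]
    [IsAdicComplete (IsLocalRing.maximalIdeal R) R] [Invertible (2 : R)]
    [AddCommGroup V₁] [Module R V₁] [Module.Finite R V₁] [Module.Projective R V₁]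
    (q₁ : QuadraticForm R V₁)
    (hreg : Function.Bijective (QuadraticMap.polarBilin q₁))
    (π : R) (hπ : Irreducible π) (u : Rˣ)
    (hK : ∃ (v : V₁ × R) (d : R), d ≠ 0 ∧
      (q₁.prod (π • QuadraticMap.sq)) v = (u : R) * d ^ 2) :
    ∃ v : V₁ × R, (q₁.prod (π • QuadraticMap.sq)) v = (u : R) := by
  obtain ⟨v, d, hd, hq⟩ := hK
  obtain ⟨n, w, rfl⟩ := IsDiscreteValuationRing.eq_unit_mul_pow_irreducible hd hπ
  clear hd
  have hπ0 : π ≠ 0 := hπ.ne_zero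
  have hprime : Prime π := hπ.prime
  induction n generalizing v w with
  | zero =>
    refine ⟨(↑w⁻¹ : R) • v, ?_⟩
    rw [QuadraticMap.map_smul, smul_eq_mul, hq]
    have h1 : (↑w⁻¹ : R) * ↑w = 1 := w.inv_mul
    simp only [pow_zero, mul_one] at *
    calc (↑w⁻¹ : R) * ↑w⁻¹ * ((u : R) * (w : R) ^ 2)
        = (u : R) * ((↑w⁻¹ : R) * ↑w) ^ 2 := by ring
      _ = (u : R) := by rw [h1]; ring
  | succ n ih =>
    obtain ⟨v₁, x⟩ := v
    have hq' : q₁ v₁ + π * x ^ 2 = (u : R) * ((w : R) * π ^ (n+1)) ^ 2 := by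
      have := hq
      simp only [QuadraticMap.prod_apply, QuadraticMap.smul_apply, QuadraticMap.sq_apply,
        smul_eq_mul] at this
      linear_combination this
    by_cases hv : ∃ w₁ : V₁, v₁ = π • w₁
    · -- descend
      obtain ⟨w₁, rfl⟩ := hv
      rw [QuadraticMap.map_smul, smul_eq_mul] at hq'
      -- π * (π * q₁ w₁ + x^2) = π * (u * w^2 * π^(2n+1))
      have h1 : π * q₁ w₁ + x ^ 2 = (u : R) * (w : R) ^ 2 * (π * π ^ (2 * n)) := by
        apply mul_left_cancel₀ hπ0
        ring_nf
        ring_nf at hq'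
        linear_combination hq'
      have hdvd : π ∣ x := by
        apply hprime.dvd_of_dvd_pow (n := 2)
        refine ⟨(u : R) * (w : R) ^ 2 * π ^ (2 * n) - q₁ w₁, ?_⟩
        linear_combination h1
      obtain ⟨y, rfl⟩ := hdvd
      have h2 : q₁ w₁ + π * y ^ 2 = (u : R) * ((w : R) * π ^ n) ^ 2 := by
        apply mul_left_cancel₀ hπ0
        ring_nf
        ring_nf at h1
        linear_combination h1
      refine ih (w₁, y) w ?_
      simpa only [QuadraticMap.prod_apply, QuadraticMap.smul_apply, QuadraticMap.sq_apply,
        smul_eq_mul, ← pow_two] using h2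
    · -- q₁ v₁ ≡ 0 mod π and v₁ primitive: use Hensel
      push_neg at hv
      have hk : q₁ v₁ = π * ((u : R) * (w : R) ^ 2 * π ^ (2 * n + 1) - x ^ 2) := by
        linear_combination hq' - 0
      obtain ⟨z, hz⟩ := exists_polar_eq_one q₁ hreg hπ hv
      set t : R := (u : R) - q₁ z with ht
      have hw' : q₁ (t • v₁ + z) - (u : R) =
          π * (t ^ 2 * ((u : R) * (w : R) ^ 2 * π ^ (2 * n + 1) - x ^ 2)) := by
        have hadd := QuadraticMap.map_add q₁ (t • v₁) z
        rw [QuadraticMap.map_smul, QuadraticMap.polar_smul_left, smul_eq_mul, smul_eq_mul,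
          hz] at hadd
        rw [hadd, hk]
        ring
      obtain ⟨v', hv'⟩ := hensel_represents q₁ hreg hπ u ⟨_, hw'⟩
      refine ⟨(v', 0), ?_⟩
      simp [QuadraticMap.prod_apply, hv']
end

section
/- Let R be a DVR with 2 invertible and residue field k, and (E,q) a quadratic form over R with simple degeneration (the radical of the reduction q̄ over k has rank ≤ 1). Then (E,q) ≅ (E₁,q₁) ⊥ (R,⟨π⟩) where q₁ is regular over R and π ∈ R. -/
/-!
STATEMENT 6: Let R be a DVR with 2 invertible and residue field k, and (E,q) a quadratic
form over R with simple degeneration (the radical of the reduction q̄ over k has rank ≤ 1).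
Then (E,q) ≅ (E₁,q₁) ⊥ (R,⟨π⟩) with q₁ regular over R and π ∈ R.

Here E is free of rank n+1 (over a local ring every f.g. projective module is free), and
the radical of the reduction is encoded via `{v | ∀ w, polar q v w ∈ m}` having rank ≤ 1
over the residue field.
-/

/-- The preimage in `V` of the radical of the reduction of `q` modulo `m`. -/
def QuadraticMap.residualRadical {R V : Type*} [CommRing R] [AddCommGroup V] [Module R V]
    (m : Ideal R) (q : QuadraticForm R V) : Submodule R V where
  carrier := {v | ∀ w, QuadraticMap.polar q v w ∈ m}
  add_mem' := fun hx hy w => by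
    rw [QuadraticMap.polar_add_left]; exact Ideal.add_mem m (hx w) (hy w)
  zero_mem' := fun w => by
    rw [QuadraticMap.polar_zero_left]; exact m.zero_mem
  smul_mem' := fun c x hx w => by
    rw [QuadraticMap.polar_smul_left, smul_eq_mul]; exact Ideal.mul_mem_left m c (hx w)

/-- Simple degeneration at `m`: the radical of the reduction of `q` mod `m` has rank ≤ 1. -/
def QuadraticMap.HasSimpleDegenerationAt {R V : Type*} [CommRing R] [AddCommGroup V]
    [Module R V] (m : Ideal R) (q : QuadraticForm R V) : Prop :=
  ∃ v₀ : V, QuadraticMap.residualRadical m q ≤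
    Submodule.span R {v₀} ⊔ (m • (⊤ : Submodule R V))

open QuadraticMap Submodule

section helpers
variable {R : Type*} [CommRing R]

lemma polar_comp'' {V V' : Type*} [AddCommGroup V] [Module R V] [AddCommGroup V'] [Module R V']
    (q : QuadraticForm R V) (g : V' →ₗ[R] V) (x y : V') :
    QuadraticMap.polar (q.comp g) x y = QuadraticMap.polar q (g x) (g y) := by
  simp [QuadraticMap.polar, QuadraticMap.comp_apply, map_add]

lemma hsd_comp {V V' : Type*} [AddCommGroup V] [Module R V] [AddCommGroup V'] [Module R V']
    (m : Ideal R) (q : QuadraticForm R V) (f : V' ≃ₗ[R] V)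
    (h : q.HasSimpleDegenerationAt m) :
    (q.comp (f : V' →ₗ[R] V)).HasSimpleDegenerationAt m := by
  obtain ⟨v₀, hv₀⟩ := h
  refine ⟨f.symm v₀, fun v hv => ?_⟩
  have hfv : f v ∈ QuadraticMap.residualRadical m q := by
    intro w
    have h1 := hv (f.symm w)
    rw [polar_comp''] at h1
    simpa using h1
  have h2 := hv₀ hfv
  have h3 : v ∈ Submodule.map (f.symm : V →ₗ[R] V') (Submodule.span R {v₀} ⊔ m • ⊤) :=
    ⟨f v, h2, f.symm_apply_apply v⟩
  rw [Submodule.map_sup, Submodule.map_span, Set.image_singleton, Submodule.map_smul'',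
    Submodule.map_top, LinearEquiv.range] at h3
  simpa using h3
end helpers

section helpers2
variable {R : Type*} [CommRing R]

lemma polar_prod'' {M N : Type*} [AddCommGroup M] [Module R M] [AddCommGroup N] [Module R N]
    (Q₁ : QuadraticForm R M) (Q₂ : QuadraticForm R N) (x y : M × N) :
    QuadraticMap.polar (Q₁.prod Q₂) x y =
      QuadraticMap.polar Q₁ x.1 y.1 + QuadraticMap.polar Q₂ x.2 y.2 := by
  simp only [QuadraticMap.polar, QuadraticMap.prod_apply, Prod.fst_add, Prod.snd_add]
  ring

lemma hsd_prod_fst {M N : Type*} [AddCommGroup M] [Module R M] [AddCommGroup N] [Module R N]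
    (m : Ideal R) (Q₁ : QuadraticForm R M) (Q₂ : QuadraticForm R N)
    (h : (Q₁.prod Q₂).HasSimpleDegenerationAt m) : Q₁.HasSimpleDegenerationAt m := by
  obtain ⟨v₀, hv₀⟩ := h
  refine ⟨v₀.1, fun v hv => ?_⟩
  have h1 : ((v, 0) : M × N) ∈ QuadraticMap.residualRadical m (Q₁.prod Q₂) := by
    intro w
    rw [polar_prod'']
    simpa [QuadraticMap.polar_zero_left] using m.add_mem (hv w.1)
      (by simp [QuadraticMap.polar_zero_left] : QuadraticMap.polar (⇑Q₂) (0 : N) w.2 ∈ m)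
  have h2 := hv₀ h1
  have h3 : v ∈ Submodule.map (LinearMap.fst R M N) (Submodule.span R {v₀} ⊔ m • ⊤) :=
    ⟨(v, 0), h2, rfl⟩
  rw [Submodule.map_sup, Submodule.map_span, Set.image_singleton, Submodule.map_smul''] at h3
  have h4 : Submodule.span R {v₀.1} ⊔ m • Submodule.map (LinearMap.fst R M N) ⊤ ≤
      Submodule.span R {v₀.1} ⊔ m • (⊤ : Submodule R M) :=
    sup_le_sup_left (Submodule.smul_mono le_rfl le_top) _
  exact h4 h3
end helpers2

/-- Linear version of the snoc equivalence. -/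
def snocLinearEquiv (R : Type*) [CommRing R] (n : ℕ) :
    ((Fin n → R) × R) ≃ₗ[R] (Fin (n + 1) → R) where
  toFun p := Fin.snoc p.1 p.2
  map_add' p q := by
    funext i
    refine Fin.lastCases ?_ (fun i => ?_) i <;> simp
  map_smul' c p := by
    funext i
    refine Fin.lastCases ?_ (fun i => ?_) i <;> simp
  invFun x := (x ∘ Fin.castSucc, x (Fin.last n))
  left_inv p := by
    refine Prod.ext ?_ ?_
    · funext i; simp
    · simp
  right_inv x := by
    funext i
    refine Fin.lastCases ?_ (fun i => ?_) i <;> simp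

/-- Shuffle `((A × B) × C)` to `((A × C) × B)`. -/
def prodShuffle (R A B C : Type*) [CommRing R] [AddCommGroup A] [Module R A]
    [AddCommGroup B] [Module R B] [AddCommGroup C] [Module R C] :
    ((A × B) × C) ≃ₗ[R] ((A × C) × B) where
  toFun p := ((p.1.1, p.2), p.1.2)
  invFun p := ((p.1.1, p.2), p.1.2)
  map_add' _ _ := rfl
  map_smul' _ _ := rfl
  left_inv _ := rfl
  right_inv _ := rfl

lemma isUnit_add_add {R : Type*} [CommRing R] [IsLocalRing R] {a b c : R}
    (ha : ¬IsUnit a) (hb : ¬IsUnit b) (hc : IsUnit c) : IsUnit (a + b + c) := by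
  by_contra h
  have h1 : a + b + c ∈ IsLocalRing.maximalIdeal R := h
  have ha' : a ∈ IsLocalRing.maximalIdeal R := ha
  have hb' : b ∈ IsLocalRing.maximalIdeal R := hb
  have : c ∈ IsLocalRing.maximalIdeal R := by
    have := (IsLocalRing.maximalIdeal R).sub_mem ((IsLocalRing.maximalIdeal R).sub_mem h1 ha') hb'
    have h2 : a + b + c - a - b = c := by ring
    rwa [h2] at this
  exact (IsLocalRing.mem_maximalIdeal c).mp this hc

lemma exists_unit_qval {R : Type*} [CommRing R] [IsLocalRing R] [Invertible (2 : R)] {k : ℕ}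
    (q : QuadraticForm R (Fin k → R)) (i j : Fin k)
    (hij : IsUnit (QuadraticMap.polar q (Pi.single i 1) (Pi.single j 1))) :
    ∃ v, IsUnit (q v) := by
  by_cases hi : IsUnit (q (Pi.single i 1))
  · exact ⟨_, hi⟩
  by_cases hj : IsUnit (q (Pi.single j 1))
  · exact ⟨_, hj⟩
  refine ⟨Pi.single i 1 + Pi.single j 1, ?_⟩
  have := QuadraticMap.map_add q (Pi.single i (1:R)) (Pi.single j 1)
  rw [this]
  exact isUnit_add_add hi hj hij

lemma polar_mem_of_entries {R : Type*} [CommRing R] [IsLocalRing R] {k : ℕ}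
    (q : QuadraticForm R (Fin k → R))
    (h : ∀ i j, ¬IsUnit (QuadraticMap.polar q (Pi.single i 1) (Pi.single j 1)))
    (v w : Fin k → R) : QuadraticMap.polar q v w ∈ IsLocalRing.maximalIdeal R := by
  have hv : v = ∑ i, v i • (Pi.single i (1 : R) : Fin k → R) := by
    funext a
    simp [Finset.sum_apply, Pi.single_apply]
  have hw : w = ∑ i, w i • (Pi.single i (1 : R) : Fin k → R) := by
    funext a
    simp [Finset.sum_apply, Pi.single_apply]
  rw [← QuadraticMap.polarBilin_apply_apply]
  rw [hv, hw, map_sum]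
  refine Ideal.sum_mem _ fun j _ => ?_
  rw [_root_.map_smul, smul_eq_mul]
  refine Ideal.mul_mem_left _ _ ?_
  rw [map_sum, LinearMap.sum_apply]
  refine Ideal.sum_mem _ fun i _ => ?_
  rw [LinearMap.map_smul₂, smul_eq_mul]
  refine Ideal.mul_mem_left _ _ ?_
  rw [QuadraticMap.polarBilin_apply_apply]
  exact h i j

lemma rank_absurd {R : Type*} [CommRing R] [IsLocalRing R] [StrongRankCondition R] {k : ℕ}
    (q : QuadraticForm R (Fin k → R))
    (hsd : q.HasSimpleDegenerationAt (IsLocalRing.maximalIdeal R))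
    (h : ∀ i j, ¬IsUnit (QuadraticMap.polar q (Pi.single i 1) (Pi.single j 1))) :
    k ≤ 1 := by
  obtain ⟨v₀, hv₀⟩ := hsd
  have htop : (⊤ : Submodule R (Fin k → R)) ≤
      Submodule.span R {v₀} ⊔ (IsLocalRing.maximalIdeal R) • ⊤ :=
    fun x _ => hv₀ (fun w => polar_mem_of_entries q h x w)
  have hle : (⊤ : Submodule R (Fin k → R)) ≤ Submodule.span R {v₀} :=
    Submodule.le_of_le_smul_of_le_jacobson_bot (Module.finite_def.mp inferInstance)
      (IsLocalRing.maximalIdeal_le_jacobson ⊥) htop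
  have hspan : Submodule.span R ({v₀} : Set (Fin k → R)) = ⊤ := top_le_iff.mp hle
  have h1 : Module.finrank R (Submodule.span R ({v₀} : Set (Fin k → R))) ≤ 1 := by
    simpa using finrank_span_le_card ({v₀} : Set (Fin k → R))
  rw [hspan, finrank_top] at h1
  rwa [Module.finrank_pi, Fintype.card_fin] at h1

lemma split_unit {R : Type*} [CommRing R] [IsDomain R] [IsPrincipalIdealRing R]
    [Invertible (2 : R)] {n : ℕ}
    (q : QuadraticForm R (Fin (n + 1) → R)) (v : Fin (n + 1) → R) (hu : IsUnit (q v)) :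
    ∃ (q' : QuadraticForm R (Fin n → R)) (F : ((Fin n → R) × R) ≃ₗ[R] (Fin (n + 1) → R)),
      ∀ y t, q (F (y, t)) = q' y + q v * (t * t) := by
  classical
  have hself : QuadraticMap.polar q v v = 2 * q v := by
    rw [QuadraticMap.polar_self, two_nsmul, ← two_mul]
  have hdu : IsUnit (QuadraticMap.polar q v v) := by
    rw [hself]; exact (isUnit_of_invertible (2 : R)).mul hu
  obtain ⟨du, hdu'⟩ := hdu
  let φ : (Fin (n + 1) → R) →ₗ[R] R := q.polarBilin v
  have hφv : φ v = QuadraticMap.polar q v v := rfl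
  set W := LinearMap.ker φ with hW
  let ψ : (Fin (n + 1) → R) →ₗ[R] R := (du⁻¹ : Rˣ) • φ
  have hψ : ∀ x, ψ x = (du⁻¹ : Rˣ) * φ x := fun x => rfl
  have hinv : ((du⁻¹ : Rˣ) : R) * QuadraticMap.polar q v v = 1 := by
    rw [← hdu']; exact du.inv_mul
  have hψv : ψ v = 1 := by rw [hψ, hφv, hinv]
  let proj : (Fin (n + 1) → R) →ₗ[R] (Fin (n + 1) → R) :=
    LinearMap.id - (LinearMap.toSpanSingleton R _ v) ∘ₗ ψ
  have hproj : ∀ x, proj x ∈ W := by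
    intro x
    rw [hW, LinearMap.mem_ker]
    have : proj x = x - ψ x • v := rfl
    rw [this, _root_.map_sub, _root_.map_smul, hφv, smul_eq_mul, hψ]
    linear_combination (-(φ x)) * hinv
  let F0 : (W × R) ≃ₗ[R] (Fin (n + 1) → R) :=
    { toFun := fun p => (p.1 : Fin (n + 1) → R) + p.2 • v
      map_add' := fun p p' => by
        simp only [Submodule.coe_add, Prod.fst_add, Prod.snd_add, add_smul]
        abel
      map_smul' := fun c p => by
        show ((c • p.1 : W) : Fin (n + 1) → R) + (c * p.2) • v
            = c • ((p.1 : Fin (n + 1) → R) + p.2 • v)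
        rw [smul_add, SetLike.val_smul, smul_smul]
      invFun := fun x => (⟨proj x, hproj x⟩, ψ x)
      left_inv := fun p => by
        have hφp : φ (p.1 : Fin (n + 1) → R) = 0 := p.1.2
        have hψp : ψ ((p.1 : Fin (n + 1) → R) + p.2 • v) = p.2 := by
          rw [hψ, map_add, _root_.map_smul, hφp, smul_eq_mul, hφv, zero_add, ← mul_assoc,
            mul_comm _ p.2, mul_assoc, hinv, mul_one]
        refine Prod.ext (Subtype.ext ?_) hψp
        show proj ((p.1 : Fin (n + 1) → R) + p.2 • v) = p.1
        show ((p.1 : Fin (n + 1) → R) + p.2 • v) - ψ _ • v = (p.1 : Fin (n + 1) → R)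
        rw [hψp]
        abel
      right_inv := fun x => by
        show proj x + ψ x • v = x
        show (x - ψ x • v) + ψ x • v = x
        abel }
  haveI : Module.Finite R W := Module.Finite.iff_fg.mpr (IsNoetherian.noetherian W)
  haveI : Module.Free R W := Module.free_of_finite_type_torsion_free'
  have hfr : Module.finrank R W = n := by
    have h1 : Module.finrank R (W × R) = Module.finrank R (Fin (n + 1) → R) := F0.finrank_eq
    rw [Module.finrank_prod, Module.finrank_self, Module.finrank_pi, Fintype.card_fin] at h1
    omega
  let b : Module.Basis (Fin n) R W := (Module.finBasis R W).reindex (finCongr hfr)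
  let F : ((Fin n → R) × R) ≃ₗ[R] (Fin (n + 1) → R) :=
    ((b.equivFun.symm : (Fin n → R) ≃ₗ[R] W).prodCongr (LinearEquiv.refl R R)).trans F0
  have hFapp : ∀ y t, F (y, t) = (b.equivFun.symm y : Fin (n + 1) → R) + t • v := by
    intro y t
    rw [LinearEquiv.trans_apply, LinearEquiv.prodCongr_apply]
    rfl
  refine ⟨q.comp ((F : ((Fin n → R) × R) →ₗ[R] (Fin (n + 1) → R)) ∘ₗ
    LinearMap.inl R (Fin n → R) R), F, fun y t => ?_⟩
  have hq0 : q.comp ((F : ((Fin n → R) × R) →ₗ[R] (Fin (n + 1) → R)) ∘ₗ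
      LinearMap.inl R (Fin n → R) R) y = q ((b.equivFun.symm y : Fin (n + 1) → R)) := by
    rw [QuadraticMap.comp_apply]
    have : ((F : ((Fin n → R) × R) →ₗ[R] (Fin (n + 1) → R)) ∘ₗ
        LinearMap.inl R (Fin n → R) R) y = F (y, 0) := rfl
    rw [this, hFapp, zero_smul, add_zero]
  rw [hq0, hFapp]
  set w : Fin (n + 1) → R := (b.equivFun.symm y : Fin (n + 1) → R) with hwdef
  have hφw : QuadraticMap.polar q v w = 0 := (b.equivFun.symm y).2
  have hadd := QuadraticMap.map_add (⇑q) w (t • v)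
  rw [hadd]
  rw [QuadraticMap.map_smul, QuadraticMap.polar_smul_right, QuadraticMap.polar_comm,
    hφw, smul_zero, add_zero, smul_eq_mul]
  ring

lemma bij_polarBilin_comp {R M N : Type*} [CommRing R] [AddCommGroup M] [Module R M]
    [AddCommGroup N] [Module R N] (Q : QuadraticForm R N) (e : M ≃ₗ[R] N)
    (h : Function.Bijective Q.polarBilin) :
    Function.Bijective (Q.comp (e : M →ₗ[R] N)).polarBilin := by
  constructor
  · intro a b hab
    apply e.injective
    apply h.1
    ext w
    have h1 := congrArg (fun f => f (e.symm w)) hab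
    simp only [QuadraticMap.polarBilin_apply_apply, polar_comp''] at h1 ⊢
    simpa using h1
  · intro ψ
    obtain ⟨x, hx⟩ := h.2 (ψ ∘ₗ (e.symm : N →ₗ[R] M))
    refine ⟨e.symm x, ?_⟩
    ext y
    have h1 := congrArg (fun f => f (e y)) hx
    simp only [QuadraticMap.polarBilin_apply_apply, polar_comp'', LinearMap.comp_apply] at h1 ⊢
    simpa using h1

lemma bij_polarBilin_prod {R M : Type*} [CommRing R] [IsDomain R] [Invertible (2 : R)]
    [AddCommGroup M] [Module R M] (Q : QuadraticForm R M) (u : R) (hu : IsUnit u)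
    (h : Function.Bijective Q.polarBilin) :
    Function.Bijective (Q.prod (u • QuadraticMap.sq)).polarBilin := by
  have hc : IsUnit ((2 : R) * u) := (isUnit_of_invertible (2 : R)).mul hu
  have hps : ∀ s t : R, QuadraticMap.polar (u • (QuadraticMap.sq : QuadraticForm R R)) s t = 2 * u * (s * t) := by
    intro s t
    simp only [QuadraticMap.polar, QuadraticMap.coeFn_smul, Pi.smul_apply,
      QuadraticMap.sq_apply, smul_eq_mul]
    ring
  have hpp : ∀ x y : M × R, QuadraticMap.polar (Q.prod (u • QuadraticMap.sq)) x y =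
      QuadraticMap.polar Q x.1 y.1 + 2 * u * (x.2 * y.2) := by
    intro x y
    rw [polar_prod'', hps]
  constructor
  · intro a b hab
    have key : ∀ w : M × R, QuadraticMap.polar Q a.1 w.1 + 2 * u * (a.2 * w.2) =
        QuadraticMap.polar Q b.1 w.1 + 2 * u * (b.2 * w.2) := by
      intro w
      have h0 := congrArg (fun f => f w) hab
      simp only [QuadraticMap.polarBilin_apply_apply] at h0
      rw [hpp, hpp] at h0
      exact h0
    have h1 : a.1 = b.1 := by
      apply h.1
      ext w
      have := key (w, 0)
      simpa [QuadraticMap.polarBilin_apply_apply] using this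
    have h2 : a.2 = b.2 := by
      have h0 := key (0, 1)
      rw [QuadraticMap.polar_zero_right, QuadraticMap.polar_zero_right] at h0
      exact hc.mul_left_cancel (by linear_combination h0)
    exact Prod.ext h1 h2
  · intro ψ
    obtain ⟨x, hx⟩ := h.2 (ψ ∘ₗ LinearMap.inl R M R)
    refine ⟨(x, (hc.unit⁻¹ : Rˣ) * ψ (0, 1)), ?_⟩
    refine LinearMap.ext fun w => ?_
    have hx1 := congrArg (fun f => f w.1) hx
    simp only [LinearMap.comp_apply, LinearMap.inl_apply] at hx1
    have hw : w = (w.1, 0) + w.2 • ((0 : M), (1 : R)) := by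
      simp [Prod.ext_iff]
    rw [QuadraticMap.polarBilin_apply_apply, hpp]
    conv_rhs => rw [hw]
    rw [map_add, _root_.map_smul, smul_eq_mul]
    have hct : (2 : R) * u * ((hc.unit⁻¹ : Rˣ) * ψ (0, 1)) = ψ (0, 1) := by
      have h3 : ((hc.unit : R)) * ((hc.unit⁻¹ : Rˣ) : R) = 1 := hc.unit.mul_inv
      rw [IsUnit.unit_spec] at h3
      rw [← mul_assoc, h3, one_mul]
    rw [QuadraticMap.polarBilin_apply_apply] at hx1
    rw [hx1]
    linear_combination w.2 * hct

theorem splitting_of_simple_degeneration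
    {R : Type*} [CommRing R] [IsDomain R] [IsDiscreteValuationRing R] [Invertible (2 : R)]
    (n : ℕ) (q : QuadraticForm R (Fin (n + 1) → R))
    (hsd : QuadraticMap.HasSimpleDegenerationAt (IsLocalRing.maximalIdeal R) q) :
    ∃ (q₁ : QuadraticForm R (Fin n → R)) (π : R),
      Function.Bijective (QuadraticMap.polarBilin q₁) ∧
      Nonempty (q.IsometryEquiv (q₁.prod (π • QuadraticMap.sq))) := by
  induction n with
  | zero =>
    refine ⟨0, q (fun _ => 1), ?_, ⟨?_⟩⟩
    · constructor
      · intro a b _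
        exact Subsingleton.elim a b
      · intro ψ
        refine ⟨0, LinearMap.ext fun x => ?_⟩
        have hx : x = 0 := Subsingleton.elim x 0
        subst hx
        rw [map_zero, map_zero]
    · let L : (Fin 1 → R) ≃ₗ[R] ((Fin 0 → R) × R) :=
        { toFun := fun x => (0, x 0)
          map_add' := fun x y => by refine Prod.ext (by simp) (by simp)
          map_smul' := fun c x => by refine Prod.ext (by simp) (by simp)
          invFun := fun p _ => p.2
          left_inv := fun x => by
            funext i
            have hi : i = 0 := Subsingleton.elim (α := Fin 1) i 0
            rw [hi]
          right_inv := fun p => Prod.ext (Subsingleton.elim _ _) rfl }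
      refine { toLinearEquiv := L, map_app' := fun x => ?_ }
      have hx : x = x 0 • (fun _ => (1 : R)) := by
        funext i
        have hi : i = 0 := Subsingleton.elim (α := Fin 1) i 0
        rw [hi]
        simp
      show (QuadraticMap.prod (0 : QuadraticForm R (Fin 0 → R))
        ((q fun _ => (1 : R)) • QuadraticMap.sq)) ((0 : Fin 0 → R), x 0) = q x
      rw [QuadraticMap.prod_apply]
      conv_rhs => rw [hx]
      rw [QuadraticMap.map_smul, smul_eq_mul]
      simp only [QuadraticMap.zero_apply, QuadraticMap.coeFn_smul, Pi.smul_apply,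
        QuadraticMap.sq_apply, smul_eq_mul, zero_add]
      ring
  | succ n IH =>
    by_cases hex : ∃ i j, IsUnit (QuadraticMap.polar q (Pi.single i 1) (Pi.single j 1))
    · obtain ⟨i, j, hij⟩ := hex
      obtain ⟨v, hv⟩ := exists_unit_qval q i j hij
      obtain ⟨q', F, hF⟩ := split_unit q v hv
      have hcomp : q.comp (F : ((Fin (n + 1) → R) × R) →ₗ[R] (Fin (n + 2) → R)) =
          q'.prod ((q v) • QuadraticMap.sq) := by
        refine QuadraticMap.ext fun p => ?_
        rw [QuadraticMap.comp_apply]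
        have h1 : q (F p) = q' p.1 + q v * (p.2 * p.2) := by
          have h2 := hF p.1 p.2
          rwa [Prod.mk.eta] at h2
        rw [show ((F : ((Fin (n + 1) → R) × R) →ₗ[R] (Fin (n + 2) → R)) p) = F p from rfl, h1]
        simp only [QuadraticMap.prod_apply, QuadraticMap.coeFn_smul, Pi.smul_apply,
          QuadraticMap.sq_apply, smul_eq_mul]
      have hsd' : q'.HasSimpleDegenerationAt (IsLocalRing.maximalIdeal R) := by
        have h2 := hsd_comp (IsLocalRing.maximalIdeal R) q F hsd
        rw [hcomp] at h2
        exact hsd_prod_fst _ _ _ h2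
      obtain ⟨q₁', π, hbij', ⟨g⟩⟩ := IH q' hsd'
      refine ⟨(q₁'.prod ((q v) • QuadraticMap.sq)).comp
        (((snocLinearEquiv R n).symm : (Fin (n + 1) → R) ≃ₗ[R] ((Fin n → R) × R)) :
          (Fin (n + 1) → R) →ₗ[R] ((Fin n → R) × R)), π, ?_, ⟨?_⟩⟩
      · exact bij_polarBilin_comp _ _ (bij_polarBilin_prod q₁' (q v) hv hbij')
      · let L : (Fin (n + 2) → R) ≃ₗ[R] ((Fin (n + 1) → R) × R) :=
          F.symm.trans ((g.toLinearEquiv.prodCongr (LinearEquiv.refl R R)).trans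
            ((prodShuffle R (Fin n → R) R R).trans
              ((snocLinearEquiv R n).prodCongr (LinearEquiv.refl R R))))
        refine { toLinearEquiv := L, map_app' := fun x => ?_ }
        set y := (F.symm x).1 with hy
        set t := (F.symm x).2 with ht
        have hx' : F (y, t) = x := by
          rw [hy, ht, Prod.mk.eta, F.apply_symm_apply]
        have hx : q x = q' y + q v * (t * t) := by
          rw [← hx']
          exact hF y t
        have hg := g.map_app y
        rw [QuadraticMap.prod_apply] at hg
        simp only [QuadraticMap.coeFn_smul, Pi.smul_apply, QuadraticMap.sq_apply,
          smul_eq_mul] at hg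
        show (((QuadraticMap.prod q₁' (q v • QuadraticMap.sq)).comp
            ((snocLinearEquiv R n).symm : (Fin (n + 1) → R) →ₗ[R] ((Fin n → R) × R))).prod
            (π • QuadraticMap.sq)) ((snocLinearEquiv R n) ((g y).1, t), (g y).2) = q x
        rw [QuadraticMap.prod_apply, QuadraticMap.comp_apply]
        rw [show (((snocLinearEquiv R n).symm :
            (Fin (n + 1) → R) ≃ₗ[R] ((Fin n → R) × R)) :
            (Fin (n + 1) → R) →ₗ[R] ((Fin n → R) × R))
            ((snocLinearEquiv R n) ((g y).1, t)) =
          (snocLinearEquiv R n).symm ((snocLinearEquiv R n) ((g y).1, t)) from rfl]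
        rw [LinearEquiv.symm_apply_apply, QuadraticMap.prod_apply]
        simp only [QuadraticMap.coeFn_smul, Pi.smul_apply, QuadraticMap.sq_apply, smul_eq_mul]
        rw [hx]
        linear_combination hg
    · push_neg at hex
      have hk := rank_absurd q hsd hex
      omega
end

section
/- Let (V,q) be a quadratic form of even rank n > 2 over a field k of characteristic ≠ 2 whose radical has dimension ≥ 2. Then the center of the even Clifford algebra C₀(q) has k-dimension at least 3. -/
/-!
STATEMENT 8: Let (V,q) be a quadratic form of even rank n > 2 over a field k of
characteristic ≠ 2 whose radical has dimension ≥ 2. Then the center of the even Clifford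
algebra C₀(q) has k-dimension at least 3.
-/

open CliffordAlgebra Cardinal

set_option linter.unusedSectionVars false

section AuxCenterRank
variable {k V : Type*} [Field k] [Invertible (2 : k)] [AddCommGroup V] [Module k V]
variable (q : QuadraticForm k V)

lemma aux_anticomm {a b : V} (h : QuadraticMap.polar q a b = 0) :
    ι q a * ι q b = -(ι q b * ι q a) := by
  have h2 := CliffordAlgebra.ι_mul_ι_add_swap (Q := q) a b
  rw [h, map_zero] at h2
  exact eq_neg_of_add_eq_zero_left h2

lemma aux_prod_mul_ι_not_mem {n : ℕ} (e : Fin n → V)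
    (ho : ∀ i j : Fin n, i ≠ j → QuadraticMap.polar q (e i) (e j) = 0) :
    ∀ (s : List (Fin n)) (l : Fin n), l ∉ s →
      (s.map fun i => ι q (e i)).prod * ι q (e l)
        = (-1 : k) ^ s.length • (ι q (e l) * (s.map fun i => ι q (e i)).prod)
  | [], l, _ => by simp
  | a :: t, l, hl => by
    have hat : l ∉ t := fun h => hl (List.mem_cons_of_mem _ h)
    have hal : a ≠ l := fun h => hl (h ▸ List.mem_cons_self)
    have ih := aux_prod_mul_ι_not_mem e ho t l hat
    simp only [List.map_cons, List.prod_cons, List.length_cons]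
    rw [mul_assoc, ih, mul_smul_comm, ← mul_assoc, aux_anticomm q (ho a l hal),
      neg_mul, mul_assoc, pow_succ, mul_neg_one, neg_smul, smul_neg]

lemma aux_prod_mul_ι_mem {n : ℕ} (e : Fin n → V)
    (ho : ∀ i j : Fin n, i ≠ j → QuadraticMap.polar q (e i) (e j) = 0) :
    ∀ (s : List (Fin n)) (l : Fin n), l ∈ s → s.Nodup →
      (s.map fun i => ι q (e i)).prod * ι q (e l)
        = -((-1 : k) ^ s.length • (ι q (e l) * (s.map fun i => ι q (e i)).prod))
  | a :: t, l, hl, hnd => by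
    rcases List.nodup_cons.mp hnd with ⟨hat, hndt⟩
    simp only [List.map_cons, List.prod_cons, List.length_cons]
    rcases eq_or_ne a l with rfl | hal
    · rw [mul_assoc, aux_prod_mul_ι_not_mem q e ho t a hat, mul_smul_comm,
        pow_succ, mul_neg_one, neg_smul, neg_neg, ← mul_assoc]
    · have hlt : l ∈ t := (List.mem_cons.mp hl).resolve_left (fun h => hal h.symm)
      have ih := aux_prod_mul_ι_mem e ho t l hlt hndt
      rw [mul_assoc, ih, mul_neg, mul_smul_comm, ← mul_assoc, aux_anticomm q (ho a l hal),
        neg_mul, mul_assoc, pow_succ, mul_neg_one, neg_smul, smul_neg, neg_neg]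

lemma aux_mem_even_iff {x : CliffordAlgebra q} : x ∈ even q ↔ x ∈ evenOdd q 0 := by
  rw [← Subalgebra.mem_toSubmodule, even_toSubmodule]

lemma aux_prod_even : ∀ (m : ℕ) (s : List V), s.length = 2 * m →
    (s.map (ι q)).prod ∈ even q
  | 0, [], _ => by simpa using Subalgebra.one_mem (even q)
  | m + 1, a :: b :: t, h => by
    simp only [List.map_cons, List.prod_cons, ← mul_assoc]
    have ht : t.length = 2 * m := by
      simpa [Nat.mul_succ, Nat.succ_eq_add_one] using h
    exact mul_mem ((aux_mem_even_iff q).mpr (ι_mul_ι_mem_evenOdd_zero q a b))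
      (aux_prod_even m t ht)
  | m + 1, [a], h => by simp [Nat.mul_succ] at h
  | m + 1, [], h => by simp [Nat.mul_succ] at h

lemma aux_contract_zero (d : Module.Dual k V) :
    ∀ (s : List V), (∀ v ∈ s, d v = 0) →
      contractLeft (Q := (0 : QuadraticForm k V)) d
        ((s.map (ι (0 : QuadraticForm k V))).prod) = 0
  | [], _ => by simpa using contractLeft_one (0 : QuadraticForm k V) d
  | a :: t, h => by
    simp only [List.map_cons, List.prod_cons]
    rw [contractLeft_ι_mul, aux_contract_zero d t (fun v hv => h v (List.mem_cons_of_mem _ hv)),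
      h a List.mem_cons_self, zero_smul, mul_zero, sub_zero]

lemma aux_assoc_zero {a b : V} (h : QuadraticMap.polar q a b = 0) :
    QuadraticMap.associated (R := k) (-q) a b = 0 := by
  have h2 := congrArg (fun B : LinearMap.BilinForm k V => B a b)
    (QuadraticMap.two_nsmul_associated k (-q))
  simp only [LinearMap.smul_apply, QuadraticMap.polarBilin_apply_apply] at h2
  have hneg : QuadraticMap.polar (⇑(-q)) a b = 0 := by
    have hh : QuadraticMap.polar (⇑(-q)) a b = -QuadraticMap.polar (⇑q) a b := by
      simp only [QuadraticMap.polar, QuadraticMap.neg_apply]; ring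
    rw [hh, h, neg_zero]
  rw [hneg, nsmul_eq_mul, Nat.cast_ofNat] at h2
  calc QuadraticMap.associated (R := k) (-q) a b
      = ⅟(2:k) * ((2:k) * QuadraticMap.associated (R := k) (-q) a b) := by
        rw [← mul_assoc, invOf_mul_self, one_mul]
    _ = 0 := by rw [h2, mul_zero]

lemma aux_changeForm_prod {n : ℕ} (e : Fin n → V)
    (ho : ∀ i j : Fin n, i ≠ j → QuadraticMap.polar q (e i) (e j) = 0) :
    ∀ (s : List (Fin n)), s.Nodup →
      changeForm (changeForm.associated_neg_proof (Q := q)) ((s.map fun i => ι q (e i)).prod)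
        = (s.map fun i => ι (0 : QuadraticForm k V) (e i)).prod
  | [], _ => by simp only [List.map_nil, List.prod_nil, changeForm_one]
  | a :: t, hnd => by
    rcases List.nodup_cons.mp hnd with ⟨hat, hndt⟩
    simp only [List.map_cons, List.prod_cons]
    rw [changeForm_ι_mul, aux_changeForm_prod e ho t hndt]
    have hc : contractLeft (Q := (0 : QuadraticForm k V))
        (QuadraticMap.associated (R := k) (-q) (e a))
        ((t.map fun i => ι (0 : QuadraticForm k V) (e i)).prod) = 0 := by
      have hmm : (t.map fun i => ι (0 : QuadraticForm k V) (e i))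
          = ((t.map e).map (ι (0 : QuadraticForm k V))) := by
        rw [List.map_map]; rfl
      rw [hmm]
      refine aux_contract_zero _ _ (fun v hv => ?_)
      obtain ⟨i, hi, rfl⟩ := List.mem_map.mp hv
      exact aux_assoc_zero q (ho a i (fun h => hat (h ▸ hi)))
    rw [hc, sub_zero]

lemma aux_wedge_mem : ∀ (s : List V),
    (s.map (ExteriorAlgebra.ι k)).prod
      ∈ (LinearMap.range (ExteriorAlgebra.ι k : V →ₗ[k] ExteriorAlgebra k V)) ^ s.length
  | [] => by
    simp only [List.map_nil, List.prod_nil, List.length_nil, pow_zero]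
    exact Submodule.one_le.mp le_rfl
  | a :: t => by
    simp only [List.map_cons, List.prod_cons, List.length_cons]
    rw [pow_succ']
    exact Submodule.mul_mem_mul (LinearMap.mem_range_self _ a) (aux_wedge_mem t)

lemma aux_wedge_ne_zero {n : ℕ} (b : Module.Basis (Fin n) k V) (s : List (Fin n)) (hs : s.Nodup) :
    (s.map fun i => ExteriorAlgebra.ι k (b i)).prod ≠ 0 := by
  classical
  set m := s.length with hm
  set v : Fin m → V := fun t => b (s.get t) with hv
  have hlist : (s.map fun i => ExteriorAlgebra.ι k (b i)).prod = ExteriorAlgebra.ιMulti k m v := by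
    rw [ExteriorAlgebra.ιMulti_apply]
    conv_lhs => rw [← List.ofFn_get s]
    rw [List.map_ofFn]
    rfl
  set g : V →ₗ[k] (Fin m → k) := LinearMap.pi (fun t => b.coord (s.get t)) with hg
  set F : (Fin m → k) [⋀^Fin m]→ₗ[k] k := (Pi.basisFun k (Fin m)).det with hF
  set Fc : V [⋀^Fin m]→ₗ[k] k := F.compLinearMap g with hFc
  set f : ∀ i, V [⋀^Fin i]→ₗ[k] k := Function.update (fun _ => 0) m Fc with hf
  have hfm : f m = Fc := Function.update_self _ _ _
  have hval : ExteriorAlgebra.liftAlternating f (ExteriorAlgebra.ιMulti k m v) = Fc v := by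
    rw [ExteriorAlgebra.liftAlternating_apply_ιMulti, hfm]
  have hinj : Function.Injective s.get := List.nodup_iff_injective_get.mp hs
  have hgv : ∀ t : Fin m, g (v t) = Pi.basisFun k (Fin m) t := by
    intro t
    funext t'
    simp only [hg, hv, LinearMap.pi_apply, Module.Basis.coord_apply, Module.Basis.repr_self,
      Pi.basisFun_apply]
    rw [Finsupp.single_apply, Pi.single_apply]
    by_cases h : t' = t
    · subst h; simp
    · rw [if_neg (fun hc => h (hinj hc).symm), if_neg h]
  have hFcv : Fc v = 1 := by
    rw [hFc, AlternatingMap.compLinearMap_apply,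
      show (fun i => g (v i)) = ⇑(Pi.basisFun k (Fin m)) from funext hgv]
    exact Module.Basis.det_self _
  intro hzero
  rw [hlist] at hzero
  rw [hzero, map_zero] at hval
  rw [hFcv] at hval
  exact one_ne_zero hval.symm

lemma aux_central_of_comm {x : CliffordAlgebra q} (h : ∀ m, ι q m * x = x * ι q m) :
    ∀ y : CliffordAlgebra q, y * x = x * y := by
  intro y
  induction y using CliffordAlgebra.induction with
  | algebraMap r => exact Algebra.commutes r x
  | ι m => exact h m
  | mul a b ha hb => rw [mul_assoc, hb, ← mul_assoc, ha, mul_assoc]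
  | add a b ha hb => rw [add_mul, mul_add, ha, hb]

lemma aux_central_even_of_anticomm {x : CliffordAlgebra q}
    (h : ∀ m, ι q m * x = -(x * ι q m)) :
    ∀ y ∈ evenOdd q 0, y * x = x * y := by
  have hswap : ∀ (m : V) (z : CliffordAlgebra q),
      ι q m * (x * z) = -(x * (ι q m * z)) := fun m z => by
    rw [← mul_assoc, h m, neg_mul, mul_assoc]
  intro y hy
  refine even_induction (Q := q) (motive := fun y _ => y * x = x * y) ?_ ?_ ?_ y hy
  · intro r; exact Algebra.commutes r x
  · intro a b _ _ ha hb; rw [add_mul, mul_add, ha, hb]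
  · intro m₁ m₂ y _ ih
    simp only [mul_assoc]
    rw [ih, hswap, mul_neg, hswap, neg_neg]

end AuxCenterRank

set_option synthInstance.maxHeartbeats 1000000 in
set_option maxHeartbeats 1000000 in
theorem center_rank_ge_three_of_radical_rank_ge_two
    {k V : Type*} [Field k] [Invertible (2 : k)]
    [AddCommGroup V] [Module k V] [FiniteDimensional k V]
    (n : ℕ) (hn : 2 < n) (hneven : Even n) (q : QuadraticForm k V)
    (hrank : Module.finrank k V = n)
    (hrad : 2 ≤ Module.rank k ↥(LinearMap.ker (QuadraticMap.polarBilin q))) :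
    3 ≤ Module.rank k
      ↥(Subalgebra.toSubmodule (Subalgebra.center k ↥(CliffordAlgebra.even q))) := by
  classical
  -- orthogonal basis
  have hsymm : (QuadraticMap.polarBilin q).IsSymm := LinearMap.isSymm_def.mpr fun x y => by
    simp [QuadraticMap.polarBilin_apply_apply, QuadraticMap.polar_comm]
  obtain ⟨e0, he0⟩ := LinearMap.BilinForm.exists_orthogonal_basis hsymm
  set e : Module.Basis (Fin n) k V := e0.reindex (finCongr hrank) with he
  have ho : ∀ i j : Fin n, i ≠ j → QuadraticMap.polar q (e i) (e j) = 0 := by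
    intro i j hij
    have hne : (finCongr hrank).symm i ≠ (finCongr hrank).symm j := fun h => hij (by
      simpa using congrArg (finCongr hrank) h)
    rw [he, Module.Basis.reindex_apply, Module.Basis.reindex_apply]
    exact he0 hne
  -- the set of null basis vectors
  set S : Set (Fin n) := {i | q (e i) = 0} with hS
  -- radical is inside the span of null basis vectors
  have hradspan : LinearMap.ker (QuadraticMap.polarBilin q) ≤ Submodule.span k (e '' S) := by
    intro x hx
    rw [Module.Basis.mem_span_image]
    intro i hi
    by_contra hiS
    have hqi : q (e i) ≠ 0 := fun h => hiS (by simpa [hS] using h)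
    set L : V →ₗ[k] k := (QuadraticMap.polarBilin q).flip (e i) with hL
    have hLx : L x = 0 := by
      have h0 : QuadraticMap.polarBilin q x = 0 := LinearMap.mem_ker.mp hx
      simp [hL, LinearMap.flip_apply, h0]
    have hLx2 : L x = e.repr x i * (2 * q (e i)) := by
      conv_lhs => rw [← Module.Basis.linearCombination_repr e x]
      rw [Finsupp.linearCombination_apply, Finsupp.sum, map_sum]
      rw [Finset.sum_eq_single i]
      · rw [map_smul, hL, LinearMap.flip_apply, QuadraticMap.polarBilin_apply_apply,
          QuadraticMap.polar_self, smul_eq_mul, two_smul, two_mul]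
      · intro j _ hji
        rw [map_smul, hL, LinearMap.flip_apply, QuadraticMap.polarBilin_apply_apply,
          ho j i hji, smul_eq_mul, mul_zero]
      · intro hni
        rw [Finsupp.notMem_support_iff.mp hni, zero_smul, map_zero]
    have h2q : (2 : k) * q (e i) ≠ 0 := by
      refine mul_ne_zero ?_ hqi
      exact Invertible.ne_zero (2 : k)
    have : e.repr x i = 0 := by
      rcases mul_eq_zero.mp (hLx2 ▸ hLx).symm.symm with h | h
      · exact h
      · exact absurd h h2q
    exact (Finsupp.mem_support_iff.mp hi) this
  -- S has two distinct elements
  have hSnontriv : S.Nontrivial := by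
    by_contra hss
    rw [Set.not_nontrivial_iff] at hss
    have h1 : Module.rank k ↥(LinearMap.ker (QuadraticMap.polarBilin q))
        ≤ Module.rank k ↥(Submodule.span k (e '' S)) := Submodule.rank_mono hradspan
    have h2 : Module.rank k ↥(Submodule.span k (e '' S)) ≤ #(e '' S) := rank_span_le _
    have h3 : #(e '' S) ≤ 1 := Cardinal.mk_le_one_iff_set_subsingleton.mpr (hss.image e)
    have := (hrad.trans (h1.trans (h2.trans h3)))
    norm_num at this
  obtain ⟨i, hiS, j, hjS, hij⟩ := hSnontriv
  -- polar-radical property of e i, e j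
  have hradvec : ∀ l, l ∈ S → ∀ m : V, QuadraticMap.polar q (e l) m = 0 := by
    intro l hl m
    have h0 : QuadraticMap.polarBilin q (e l) = 0 := by
      refine e.ext (fun j' => ?_)
      rcases eq_or_ne l j' with rfl | hlj
      · rw [QuadraticMap.polarBilin_apply_apply, QuadraticMap.polar_self]
        have : q (e l) = 0 := hl
        rw [this, smul_zero, LinearMap.zero_apply]
      · rw [QuadraticMap.polarBilin_apply_apply, ho l j' hlj, LinearMap.zero_apply]
    have := congrArg (fun f : V →ₗ[k] k => f m) h0
    simpa [QuadraticMap.polarBilin_apply_apply] using this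
  -- the two key central elements
  set a : CliffordAlgebra q := ι q (e i) * ι q (e j) with ha_def
  set ω : CliffordAlgebra q := ((List.finRange n).map fun l => ι q (e l)).prod with hω_def
  -- a commutes with all ι m
  have ha_comm : ∀ m, ι q m * a = a * ι q m := by
    intro m
    have hi' : QuadraticMap.polar q m (e i) = 0 := by
      rw [QuadraticMap.polar_comm]; exact hradvec i hiS m
    have hj' : QuadraticMap.polar q m (e j) = 0 := by
      rw [QuadraticMap.polar_comm]; exact hradvec j hjS m
    rw [ha_def, ← mul_assoc, aux_anticomm q hi', neg_mul, mul_assoc,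
      aux_anticomm q hj', mul_neg, neg_neg, ← mul_assoc]
  -- ω anticommutes with all ι m
  have hω_anti_basis : ∀ l : Fin n, ι q (e l) * ω + ω * ι q (e l) = 0 := by
    intro l
    have hmem := aux_prod_mul_ι_mem q e ho (List.finRange n) l
      (List.mem_finRange l) (List.nodup_finRange n)
    rw [List.length_finRange, Even.neg_one_pow hneven, one_smul] at hmem
    rw [← hω_def] at hmem
    rw [hmem, add_neg_cancel]
  have hω_anti : ∀ m : V, ι q m * ω = -(ω * ι q m) := by
    have hmap : ((LinearMap.mulRight k ω).comp (ι q))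
        + ((LinearMap.mulLeft k ω).comp (ι q)) = 0 := by
      refine e.ext (fun l => ?_)
      simpa [LinearMap.mulRight_apply, LinearMap.mulLeft_apply, add_comm] using
        hω_anti_basis l
    intro m
    have := congrArg (fun f : V →ₗ[k] CliffordAlgebra q => f m) hmap
    simp only [LinearMap.add_apply, LinearMap.comp_apply, LinearMap.mulRight_apply,
      LinearMap.mulLeft_apply, LinearMap.zero_apply] at this
    -- this : ι q m * ω + ω * ι q m = 0 (order?)
    exact eq_neg_of_add_eq_zero_left (by rw [add_comm] at this ⊢; exact this)
  -- memberships in the even subalgebra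
  have ha_even : a ∈ even q := (aux_mem_even_iff q).mpr (ι_mul_ι_mem_evenOdd_zero q _ _)
  have hω_even : ω ∈ even q := by
    obtain ⟨m, hm⟩ := hneven
    have hlen : ((List.finRange n).map e).length = 2 * m := by
      simp [List.length_finRange, hm, two_mul]
    have hmem := aux_prod_even q m ((List.finRange n).map e) hlen
    rw [List.map_map] at hmem
    exact hmem
  -- centrality
  have ha_center : ∀ y : CliffordAlgebra q, y * a = a * y := aux_central_of_comm q ha_comm
  have hω_center : ∀ y ∈ evenOdd q 0, y * ω = ω * y := aux_central_even_of_anticomm q hω_anti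
  set C := Subalgebra.center k ↥(even q) with hC
  have hac : (⟨a, ha_even⟩ : ↥(even q)) ∈ C :=
    Subalgebra.mem_center_iff.mpr (fun b => Subtype.ext (ha_center b.1))
  have hωc : (⟨ω, hω_even⟩ : ↥(even q)) ∈ C :=
    Subalgebra.mem_center_iff.mpr
      (fun b => Subtype.ext (hω_center b.1 ((aux_mem_even_iff q).mp b.2)))
  set u : Fin 3 → ↥(Subalgebra.toSubmodule C) :=
    ![⟨1, (Subalgebra.mem_toSubmodule C).mpr (one_mem C)⟩,
      ⟨⟨a, ha_even⟩, (Subalgebra.mem_toSubmodule C).mpr hac⟩,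
      ⟨⟨ω, hω_even⟩, (Subalgebra.mem_toSubmodule C).mpr hωc⟩] with hu
  set f : ↥(Subalgebra.toSubmodule C) →ₗ[k] CliffordAlgebra q :=
    (Subalgebra.val (even q)).toLinearMap ∘ₗ (Subalgebra.toSubmodule C).subtype with hfdef
  have hfu : ⇑f ∘ u = ![1, a, ω] := by
    funext t; fin_cases t <;> rfl
  -- the images in the exterior algebra
  set w2 : ExteriorAlgebra k V := ExteriorAlgebra.ι k (e i) * ExteriorAlgebra.ι k (e j) with hw2
  set wn : ExteriorAlgebra k V :=
    ((List.finRange n).map fun l => ExteriorAlgebra.ι k (e l)).prod with hwn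
  -- independence downstairs in the exterior algebra
  have hli3 : LinearIndependent k ![(1 : ExteriorAlgebra k V), w2, wn] := by
    have hInt : DirectSum.IsInternal (fun i : ℕ => ⋀[k]^i V) :=
      DirectSum.Decomposition.isInternal _
    have hindep := hInt.submodule_iSupIndep
    set d : Fin 3 → ℕ := fun t => if t.val = 0 then 0 else if t.val = 1 then 2 else n with hd
    have hdinj : Function.Injective d := by
      intro s t hst
      simp only [hd] at hst
      fin_cases s <;> fin_cases t <;>
        first | rfl | (simp at hst; omega) | (simp at hst) | omega
    refine iSupIndep.linearIndependent _ (hindep.comp hdinj) ?_ ?_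
    · intro t
      fin_cases t
      · have h0 := aux_wedge_mem (k := k) (V := V) []
        simp only [List.map_nil, List.prod_nil, List.length_nil] at h0
        exact h0
      · have h1 := aux_wedge_mem (k := k) (V := V) [e i, e j]
        simp only [List.map_cons, List.map_nil, List.prod_cons, List.prod_nil, mul_one,
          List.length_cons, List.length_nil] at h1
        exact h1
      · have h2 := aux_wedge_mem (k := k) (V := V) ((List.finRange n).map e)
        rw [List.map_map, List.length_map, List.length_finRange] at h2
        exact h2
    · intro t
      fin_cases t
      · exact one_ne_zero
      · have := aux_wedge_ne_zero e [i, j] (by simp [hij])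
        simpa [hw2] using this
      · have := aux_wedge_ne_zero e (List.finRange n) (List.nodup_finRange n)
        simpa [hwn] using this
  -- independence in the Clifford algebra
  have hliCl : LinearIndependent k ![(1 : CliffordAlgebra q), a, ω] := by
    apply LinearIndependent.of_comp (equivExterior q).toLinearMap
    have himg : ⇑(equivExterior q).toLinearMap ∘ ![(1 : CliffordAlgebra q), a, ω]
        = ![(1 : ExteriorAlgebra k V), w2, wn] := by
      funext t
      fin_cases t
      · show equivExterior q 1 = 1
        exact changeForm_one (changeForm.associated_neg_proof (Q := q))
      · show equivExterior q a = w2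
        have h2 := aux_changeForm_prod q e ho [i, j] (by simp [hij])
        simp only [List.map_cons, List.map_nil, List.prod_cons, List.prod_nil, mul_one] at h2
        exact h2
      · show equivExterior q ω = wn
        exact aux_changeForm_prod q e ho (List.finRange n) (List.nodup_finRange n)
    rw [himg]
    exact hli3
  have hliu : LinearIndependent k u := by
    refine LinearIndependent.of_comp f ?_
    rw [hfu]
    exact hliCl
  have hcard := hliu.cardinal_lift_le_rank
  rw [Cardinal.mk_fin] at hcard
  rw [hC] at hcard
  calc (3 : Cardinal) ≤ Cardinal.lift.{0} (Module.rank k ↥(Subalgebra.toSubmodule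
      (Subalgebra.center k ↥(even q)))) := by
        simpa using hcard
    _ = Module.rank k ↥(Subalgebra.toSubmodule (Subalgebra.center k ↥(even q))) := by
        simp
end

section
/- Let R be a regular local ring of dimension ≥ 2 with 2 invertible, with maximal ideal 𝔪, S = Spec R, and D ⊂ S a regular divisor. Let (V,q) be a quadratic form over R such that its restriction to S ∖ {𝔪} has simple degeneration of multiplicity one along D ∖ {𝔪}. Then the radical of q at the closed point has rank at most 1; i.e., (V,q) has simple degeneration of multiplicity one along all of D. -/
/-- If `A *ᵥ w` has all entries in a prime ideal `m` and some entry of `w` is not in `m`,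
then `det A ∈ m`. -/
lemma det_mem_of_mulVec_mem {R : Type*} [CommRing R] {n : ℕ} (m : Ideal R) [m.IsPrime]
    (A : Matrix (Fin n) (Fin n) R) (w : Fin n → R)
    (hAw : ∀ l, A.mulVec w l ∈ m) {j : Fin n} (hj : w j ∉ m) : A.det ∈ m := by
  have h1 : (Matrix.adjugate A).mulVec (A.mulVec w) = A.det • w := by
    rw [Matrix.mulVec_mulVec, Matrix.adjugate_mul, Matrix.smul_mulVec, Matrix.one_mulVec]
  have h2 : A.det * w j ∈ m := by
    have hmem : (Matrix.adjugate A).mulVec (A.mulVec w) j ∈ m := by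
      simp only [Matrix.mulVec, dotProduct]
      exact Ideal.sum_mem m fun l _ => Ideal.mul_mem_left m _ (hAw l)
    rw [h1] at hmem
    simpa using hmem
  rcases (‹m.IsPrime›.mem_or_mem h2) with h | h
  · exact h
  · exact absurd h hj

/-- Pointwise membership in an ideal puts a vector into `m • ⊤`. -/
lemma mem_smul_top_of_forall {R : Type*} [CommRing R] {n : ℕ} (m : Ideal R)
    {x : Fin n → R} (hx : ∀ l, x l ∈ m) :
    x ∈ m • (⊤ : Submodule R (Fin n → R)) := by
  have hxe : x = ∑ l, x l • (Pi.single l (1 : R) : Fin n → R) := by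
    have h1 : ∀ l : Fin n, x l • (Pi.single l (1 : R) : Fin n → R) = Pi.single l (x l) := by
      intro l; ext k; simp [Pi.single_apply, mul_ite]
    simp_rw [h1]
    rw [Finset.univ_sum_single]
  rw [hxe]
  exact Submodule.sum_mem _ fun l _ =>
    Submodule.smul_mem_smul (hx l) Submodule.mem_top

theorem simple_degeneration_extends_over_closed_point
    {R : Type*} [CommRing R] [IsLocalRing R] [IsNoetherianRing R] [IsDomain R]
    [Invertible (2 : R)]
    -- R is regular: the maximal ideal is generated by dim R elements
    (hregular : ∃ s : Finset R, Ideal.span (s : Set R) = IsLocalRing.maximalIdeal R ∧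
      (s.card : WithBot ℕ∞) = ringKrullDim R)
    (hdim : 2 ≤ ringKrullDim R)
    (n : ℕ) (q : QuadraticForm R (Fin n → R))
    (π : R) (hπ : π ∈ IsLocalRing.maximalIdeal R)
    (hπ2 : π ∉ (IsLocalRing.maximalIdeal R) ^ 2)
    -- simple degeneration of multiplicity one along D ∖ {𝔪}: the discriminant of q
    -- is a unit multiple of the regular parameter π cutting out D
    (hdisc : ∃ u : Rˣ,
      (LinearMap.toMatrix₂ (Pi.basisFun R (Fin n)) (Pi.basisFun R (Fin n))
        (QuadraticMap.polarBilin q)).det = (u : R) * π) :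
    ∃ v₀ : Fin n → R, QuadraticMap.residualRadical (IsLocalRing.maximalIdeal R) q ≤
      Submodule.span R {v₀} ⊔ (IsLocalRing.maximalIdeal R • (⊤ : Submodule R (Fin n → R))) := by
  classical
  set 𝔪 := IsLocalRing.maximalIdeal R with h𝔪
  set M := LinearMap.toMatrix₂ (Pi.basisFun R (Fin n)) (Pi.basisFun R (Fin n))
      (QuadraticMap.polarBilin q) with hM
  set K := QuadraticMap.residualRadical 𝔪 q with hK
  obtain ⟨u, hu⟩ := hdisc
  have hMapply : ∀ a b, M a b = QuadraticMap.polar q (Pi.single a 1) (Pi.single b 1) := by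
    intro a b
    rw [hM, LinearMap.toMatrix₂_apply]
    simp [Pi.basisFun_apply]
  -- polar in terms of the matrix
  have hpolar : ∀ (x : Fin n → R) (b : Fin n),
      QuadraticMap.polar q x (Pi.single b 1) = ∑ l, x l * M l b := by
    intro x b
    have hxe : x = ∑ l, x l • (Pi.single l (1 : R) : Fin n → R) := by
      have := (Pi.basisFun R (Fin n)).sum_repr x
      simpa [Pi.basisFun_repr, Pi.basisFun_apply] using this.symm
    calc QuadraticMap.polar q x (Pi.single b 1)
        = (QuadraticMap.polarBilin q) x (Pi.single b 1) := rfl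
      _ = (QuadraticMap.polarBilin q) (∑ l, x l • (Pi.single l (1 : R) : Fin n → R)) (Pi.single b 1) := by
          rw [← hxe]
      _ = ∑ l, x l * M l b := by
          rw [map_sum, LinearMap.sum_apply]
          refine Finset.sum_congr rfl fun l _ => ?_
          rw [map_smul, LinearMap.smul_apply, smul_eq_mul, hMapply]
          rfl
  -- membership in K gives mulVec conditions
  have hKvec : ∀ x, x ∈ K → ∀ b, M.mulVec x b ∈ 𝔪 := by
    intro x hx b
    have hx' : ∀ w, QuadraticMap.polar q x w ∈ 𝔪 := hx
    have := hx' (Pi.single b 1)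
    rw [hpolar] at this
    have heq : M.mulVec x b = ∑ l, x l * M l b := by
      simp only [Matrix.mulVec, dotProduct]
      refine Finset.sum_congr rfl fun l _ => ?_
      rw [hMapply, hMapply, QuadraticMap.polar_comm, mul_comm]
    rw [heq]
    exact this
  haveI : (𝔪).IsPrime := (IsLocalRing.maximalIdeal.isMaximal R).isPrime
  -- main claim
  have main : ∀ v₀ ∈ K, ∀ w ∈ K, ∀ i : Fin n, v₀ i ∉ 𝔪 → w i ∈ 𝔪 → ∀ j, w j ∈ 𝔪 := by
    intro v₀ hv₀ w hw i hi hwi j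
    by_contra hj
    -- adjugate entries in row i are in 𝔪
    have hadj : ∀ b, Matrix.adjugate M i b ∈ 𝔪 := by
      intro b
      rw [Matrix.adjugate_apply]
      refine det_mem_of_mulVec_mem 𝔪 _ w ?_ hj
      intro l
      by_cases hl : l = b
      · subst hl
        have : (M.updateRow l (Pi.single i 1)).mulVec w l = w i := by
          simp [Matrix.mulVec, dotProduct, Matrix.updateRow_apply, Pi.single_apply,
            ite_mul]
        rw [this]; exact hwi
      · have : (M.updateRow b (Pi.single i 1)).mulVec w l = M.mulVec w l := by
          simp [Matrix.mulVec, dotProduct, Matrix.updateRow_apply, hl]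
        rw [this]; exact hKvec w hw l
    -- det M * v₀ i ∈ 𝔪²
    have hdm : M.det * v₀ i ∈ 𝔪 ^ 2 := by
      have h1 : (Matrix.adjugate M).mulVec (M.mulVec v₀) = M.det • v₀ := by
        rw [Matrix.mulVec_mulVec, Matrix.adjugate_mul, Matrix.smul_mulVec,
          Matrix.one_mulVec]
      have h2 : (Matrix.adjugate M).mulVec (M.mulVec v₀) i ∈ 𝔪 ^ 2 := by
        simp only [Matrix.mulVec, dotProduct]
        rw [pow_two]
        exact Ideal.sum_mem _ fun b _ => Ideal.mul_mem_mul (hadj b) (hKvec v₀ hv₀ b)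
      rw [h1] at h2
      simpa using h2
    -- v₀ i is a unit
    have hunit : IsUnit (v₀ i) := by
      by_contra hnu
      exact hi ((IsLocalRing.mem_maximalIdeal _).mpr hnu)
    obtain ⟨u₀, hu₀⟩ := hunit
    have hdet : M.det ∈ 𝔪 ^ 2 := by
      have : M.det * v₀ i * (↑u₀⁻¹ : R) ∈ 𝔪 ^ 2 := Ideal.mul_mem_right _ _ hdm
      have heq : M.det * v₀ i * (↑u₀⁻¹ : R) = M.det := by
        rw [mul_assoc, ← hu₀, Units.mul_inv, mul_one]
      rwa [heq] at this
    -- contradiction with π ∉ 𝔪²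
    apply hπ2
    have : (↑u⁻¹ : R) * M.det ∈ 𝔪 ^ 2 := Ideal.mul_mem_left _ _ hdet
    rwa [hu, ← mul_assoc, Units.inv_mul, one_mul] at this
  -- case analysis
  by_cases hA : ∀ v ∈ K, ∀ i, v i ∈ 𝔪
  · refine ⟨0, fun v hv => ?_⟩
    exact Submodule.mem_sup_right (mem_smul_top_of_forall 𝔪 (hA v hv))
  · push_neg at hA
    obtain ⟨v₀, hv₀K, i, hi⟩ := hA
    refine ⟨v₀, fun v hv => ?_⟩
    have hunit : IsUnit (v₀ i) := by
      by_contra hnu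
      exact hi ((IsLocalRing.mem_maximalIdeal _).mpr hnu)
    obtain ⟨u₀, hu₀⟩ := hunit
    set c : R := v i * (↑u₀⁻¹ : R) with hc
    set w : Fin n → R := v - c • v₀ with hw
    have hwK : w ∈ K := Submodule.sub_mem _ hv (Submodule.smul_mem _ c hv₀K)
    have hwi : w i = 0 := by
      simp only [hw, Pi.sub_apply, Pi.smul_apply, smul_eq_mul, hc]
      rw [mul_assoc, ← hu₀, Units.inv_mul, mul_one, sub_self]
    have hwm : ∀ j, w j ∈ 𝔪 := main v₀ hv₀K w hwK i hi (hwi ▸ Ideal.zero_mem 𝔪)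
    have hveq : c • v₀ + w = v := by rw [hw]; abel
    rw [← hveq]
    exact Submodule.add_mem _
      (Submodule.mem_sup_left (Submodule.smul_mem _ c (Submodule.mem_span_singleton_self v₀)))
      (Submodule.mem_sup_right (mem_smul_top_of_forall 𝔪 hwm))
end
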